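/- (Uniform weighted bound along the dyadic sequence) Let T > 0, q ∈ (1, 2^{1/4}), M > 0, β > M·q⁴/(2(q − 1)), and let α be a real number with β/2 < α < β/q⁴. Define ρ_α(t) = exp(−α/(T − t)²) and ρ₀(t) = M·exp( M/((q − 1)(T − t)) − β/(q⁴(T − t)²) ) for t ∈ [0, T), and set T_j = T·(1 − q^{−j}) for integers j ≥ 0. Then there exists a constant C > 0 such that for every integer j ≥ 1: ( sup_{t ∈ [T_j, T_{j+1}]} 1/ρ_α(t) + sup_{t ∈ [T_j, T_{j+1}]} |(d/dt)(1/ρ_α)(t)| )² · ρ₀(T_{j+1})² / (T − T_{j+1})⁶ ≤ C. -/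

import Mathlib

/-- The weight `ρ_α(t) = exp(-α/(T-t)²)` used in the source term method. -/
noncomputable def rhoAlpha (T α : ℝ) (t : ℝ) : ℝ := Real.exp (-α / (T - t)^2)

/-- The weight `ρ₀(t) = M·exp(M/((q-1)(T-t)) - β/(q⁴(T-t)²))` used in the source term method. -/
noncomputable def rhoZero (T q M β : ℝ) (t : ℝ) : ℝ :=
  M * Real.exp (M / ((q - 1) * (T - t)) - β / (q^4 * (T - t)^2))

/-- The dyadic-type time sequence `T_j = T(1 - q^{-j})`. -/
noncomputable def Tdyad (T q : ℝ) (j : ℕ) : ℝ := T * (1 - (q^j)⁻¹)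

open Filter Real Topology

lemma aux_deriv (T α : ℝ) {t : ℝ} (ht : t < T) :
    deriv (fun s => 1 / rhoAlpha T α s) t = 2 * α / (T - t)^3 * Real.exp (α / (T - t)^2) := by
  have hne : T - t ≠ 0 := sub_ne_zero.2 (ne_of_gt ht)
  have h1 : HasDerivAt (fun s : ℝ => T - s) (-1) t := by
    simpa using (hasDerivAt_id' t).const_sub T
  have h5 := (((h1.pow 2).inv (pow_ne_zero 2 hne)).const_mul α).exp
  have heq : (fun s => 1 / rhoAlpha T α s) = fun s => Real.exp (α * ((T - s)^2)⁻¹) := by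
    funext s
    rw [rhoAlpha, one_div, ← Real.exp_neg]
    congr 1
    ring
  rw [heq, HasDerivAt.deriv (f := fun s => Real.exp (α * ((T - s)^2)⁻¹)) h5]
  simp only [Pi.inv_apply, Pi.pow_apply]
  have h6 : α / (T - t)^2 = α * ((T - t)^2)⁻¹ := by ring
  rw [h6]
  field_simp
  ring


theorem stmt19 (T q M β α : ℝ) (hT : 0 < T) (hq1 : 1 < q) (hq2 : q < (2:ℝ) ^ ((1:ℝ)/4))
    (hM : 0 < M) (hβ : M * q^4 / (2 * (q - 1)) < β) (hα1 : β / 2 < α) (hα2 : α < β / q^4) :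
    ∃ C > (0:ℝ), ∀ j : ℕ, 1 ≤ j →
      (sSup ((fun t => 1 / rhoAlpha T α t) '' Set.Icc (Tdyad T q j) (Tdyad T q (j + 1))) +
        sSup ((fun t => |deriv (fun s => 1 / rhoAlpha T α s) t|) ''
          Set.Icc (Tdyad T q j) (Tdyad T q (j + 1))))^2
        * rhoZero T q M β (Tdyad T q (j + 1))^2 / (T - Tdyad T q (j + 1))^6 ≤ C := by
  have hq0 : (0:ℝ) < q := lt_trans one_pos hq1
  have hq1' : (0:ℝ) < q - 1 := by linarith
  have hβ0 : (0:ℝ) < β := lt_trans (by positivity) hβ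
  have hα0 : (0:ℝ) < α := lt_trans (by positivity) hα1
  have hTne : T ≠ 0 := ne_of_gt hT
  have hqne : q ≠ 0 := ne_of_gt hq0
  set c1 : ℝ := 2*α/T^3 with hc1def
  set c2 : ℝ := 2*M/((q-1)*T) with hc2def
  set c3 : ℝ := 2*(β/q^4 - α)/T^2 with hc3def
  have hc1 : 0 < c1 := div_pos (by linarith) (by positivity)
  have hc2 : 0 < c2 := div_pos (by linarith) (mul_pos hq1' hT)
  have hc3 : 0 < c3 := div_pos (by linarith) (by positivity)
  set r : ℕ → ℝ := fun j => q^(j+1) with hrdef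
  have hrpos : ∀ j, 0 < r j := fun j => pow_pos hq0 _
  have hTT : ∀ j : ℕ, T - Tdyad T q j = T / q^j := by
    intro j
    rw [Tdyad, div_eq_mul_inv]
    ring
  have hTTpos : ∀ j : ℕ, 0 < T - Tdyad T q j := by
    intro j
    rw [hTT]
    positivity
  set g : ℕ → ℝ := fun j =>
    (M^2/T^6) * (1 + c1*(r j)^3)^2 * ((r j)^6) * Real.exp (c2*(r j) - c3*(r j)^2) with hgdef
  -- Step 1: pointwise bound
  have key : ∀ j : ℕ,
      (sSup ((fun t => 1 / rhoAlpha T α t) '' Set.Icc (Tdyad T q j) (Tdyad T q (j + 1))) +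
        sSup ((fun t => |deriv (fun s => 1 / rhoAlpha T α s) t|) ''
          Set.Icc (Tdyad T q j) (Tdyad T q (j + 1))))^2
        * rhoZero T q M β (Tdyad T q (j + 1))^2 / (T - Tdyad T q (j + 1))^6 ≤ g j := by
    intro j
    have hrj := hrpos j
    have hTj1 : T - Tdyad T q (j+1) = T / r j := hTT (j+1)
    have hmem : ∀ t ∈ Set.Icc (Tdyad T q j) (Tdyad T q (j+1)),
        T / r j ≤ T - t ∧ t < T := by
      intro t ht
      have h2 := ht.2
      constructor
      · rw [← hTj1]; linarith
      · linarith [hTTpos (j+1)]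
    have hexp : ∀ t ∈ Set.Icc (Tdyad T q j) (Tdyad T q (j+1)),
        α / (T - t)^2 ≤ α * (r j)^2 / T^2 := by
      intro t ht
      obtain ⟨h1, _⟩ := hmem t ht
      have hd : (0:ℝ) < T / r j := by positivity
      have h2 : (T / r j)^2 ≤ (T - t)^2 := pow_le_pow_left₀ hd.le h1 2
      have h3 : α / (T - t)^2 ≤ α / (T / r j)^2 :=
        div_le_div_of_nonneg_left hα0.le (by positivity) h2
      have h4 : α / (T / r j)^2 = α * (r j)^2 / T^2 := by
        field_simp
      linarith
    have hcube : ∀ t ∈ Set.Icc (Tdyad T q j) (Tdyad T q (j+1)),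
        2 * α / (T - t)^3 ≤ c1 * (r j)^3 := by
      intro t ht
      obtain ⟨h1, _⟩ := hmem t ht
      have hd : (0:ℝ) < T / r j := by positivity
      have h2 : (T / r j)^3 ≤ (T - t)^3 := pow_le_pow_left₀ hd.le h1 3
      have h3 : 2*α / (T - t)^3 ≤ 2*α / (T / r j)^3 :=
        div_le_div_of_nonneg_left (by linarith) (by positivity) h2
      have h4 : 2*α / (T / r j)^3 = c1 * (r j)^3 := by
        rw [hc1def]; field_simp
      linarith
    have hval : ∀ t : ℝ, 1 / rhoAlpha T α t = Real.exp (α / (T - t)^2) := by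
      intro t
      rw [rhoAlpha, one_div, ← Real.exp_neg]
      congr 1
      ring
    have S1 : sSup ((fun t => 1 / rhoAlpha T α t) '' Set.Icc (Tdyad T q j) (Tdyad T q (j + 1)))
        ≤ Real.exp (α * (r j)^2 / T^2) := by
      apply Real.sSup_le _ (Real.exp_pos _).le
      rintro x ⟨t, ht, rfl⟩
      show 1 / rhoAlpha T α t ≤ Real.exp (α * (r j)^2 / T^2)
      rw [hval]
      exact Real.exp_le_exp.2 (hexp t ht)
    have S2 : sSup ((fun t => |deriv (fun s => 1 / rhoAlpha T α s) t|) ''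
          Set.Icc (Tdyad T q j) (Tdyad T q (j + 1)))
        ≤ c1 * (r j)^3 * Real.exp (α * (r j)^2 / T^2) := by
      apply Real.sSup_le _ (by positivity)
      rintro x ⟨t, ht, rfl⟩
      obtain ⟨h1, h2⟩ := hmem t ht
      have hTt : 0 < T - t := by linarith
      show |deriv (fun s => 1 / rhoAlpha T α s) t| ≤ c1 * (r j)^3 * Real.exp (α * (r j)^2 / T^2)
      rw [aux_deriv T α h2, abs_of_nonneg (by positivity)]
      have e1 : 2 * α / (T - t)^3 ≤ c1 * (r j)^3 := hcube t ht
      have e2 : Real.exp (α / (T - t)^2) ≤ Real.exp (α * (r j)^2 / T^2) :=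
        Real.exp_le_exp.2 (hexp t ht)
      exact mul_le_mul e1 e2 (Real.exp_pos _).le (by positivity)
    have S1n : 0 ≤ sSup ((fun t => 1 / rhoAlpha T α t) ''
        Set.Icc (Tdyad T q j) (Tdyad T q (j + 1))) := by
      apply Real.sSup_nonneg
      rintro x ⟨t, _, rfl⟩
      show (0:ℝ) ≤ 1 / rhoAlpha T α t
      rw [hval]
      positivity
    have S2n : 0 ≤ sSup ((fun t => |deriv (fun s => 1 / rhoAlpha T α s) t|) ''
        Set.Icc (Tdyad T q j) (Tdyad T q (j + 1))) := by
      apply Real.sSup_nonneg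
      rintro x ⟨t, _, rfl⟩
      exact abs_nonneg _
    have hsum : sSup ((fun t => 1 / rhoAlpha T α t) '' Set.Icc (Tdyad T q j) (Tdyad T q (j + 1))) +
        sSup ((fun t => |deriv (fun s => 1 / rhoAlpha T α s) t|) ''
          Set.Icc (Tdyad T q j) (Tdyad T q (j + 1)))
        ≤ (1 + c1*(r j)^3) * Real.exp (α * (r j)^2 / T^2) := by
      have e : (1 + c1*(r j)^3) * Real.exp (α * (r j)^2 / T^2)
          = Real.exp (α * (r j)^2 / T^2) + c1 * (r j)^3 * Real.exp (α * (r j)^2 / T^2) := by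
        ring
      rw [e]
      exact add_le_add S1 S2
    have step : (sSup ((fun t => 1 / rhoAlpha T α t) '' Set.Icc (Tdyad T q j) (Tdyad T q (j + 1))) +
        sSup ((fun t => |deriv (fun s => 1 / rhoAlpha T α s) t|) ''
          Set.Icc (Tdyad T q j) (Tdyad T q (j + 1))))^2
        * rhoZero T q M β (Tdyad T q (j + 1))^2 / (T - Tdyad T q (j + 1))^6
        ≤ ((1 + c1*(r j)^3) * Real.exp (α * (r j)^2 / T^2))^2
          * rhoZero T q M β (Tdyad T q (j + 1))^2 / (T - Tdyad T q (j + 1))^6 := by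
      apply div_le_div_of_nonneg_right ?_ (by positivity)
      apply mul_le_mul_of_nonneg_right ?_ (sq_nonneg _)
      exact pow_le_pow_left₀ (add_nonneg S1n S2n) hsum 2
    refine le_trans step (le_of_eq ?_)
    rw [rhoZero, hTj1, hgdef]
    have hrne : r j ≠ 0 := ne_of_gt hrj
    have hExp : Real.exp (α * (r j)^2 / T^2) ^ 2 *
        Real.exp (M / ((q - 1) * (T / r j)) - β / (q^4 * (T / r j)^2)) ^ 2
        = Real.exp (c2*(r j) - c3*(r j)^2) := by
      have exps : ∀ x : ℝ, Real.exp x ^ 2 = Real.exp (x + x) := fun x => by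
        rw [Real.exp_add]; ring
      rw [exps, exps, ← Real.exp_add]
      congr 1
      rw [hc2def, hc3def]
      field_simp
      ring
    have expand : ((1 + c1*(r j)^3) * Real.exp (α * (r j)^2 / T^2))^2
          * (M * Real.exp (M / ((q - 1) * (T / r j)) - β / (q^4 * (T / r j)^2)))^2
          / (T / r j)^6
        = (1 + c1*(r j)^3)^2 * M^2
          * (Real.exp (α * (r j)^2 / T^2) ^ 2 *
            Real.exp (M / ((q - 1) * (T / r j)) - β / (q^4 * (T / r j)^2)) ^ 2)
          * ((r j)^6 / T^6) := by
      field_simp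
    rw [expand, hExp]
    ring
  -- Step 2: the dominating sequence tends to 0
  have hrT : Tendsto r atTop atTop := by
    have h := tendsto_pow_atTop_atTop_of_one_lt hq1
    exact h.comp (tendsto_add_atTop_nat 1)
  have hzT : Tendsto (fun j => c3/2 * (r j)^2) atTop atTop := by
    apply Tendsto.const_mul_atTop (by positivity : (0:ℝ) < c3/2)
    exact (hrT.atTop_mul_atTop₀ hrT).congr (fun j => (pow_two (r j)).symm)
  have hhT : Tendsto (fun j => (M^2/T^6) * (1+c1)^2 * (2/c3)^6 *
      ((c3/2 * (r j)^2)^6 * Real.exp (-(c3/2 * (r j)^2)))) atTop (𝓝 0) := by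
    have h0 := (Real.tendsto_pow_mul_exp_neg_atTop_nhds_zero 6).comp hzT
    have h1 := h0.const_mul ((M^2/T^6) * (1+c1)^2 * (2/c3)^6)
    simpa using h1
  have hgT : Tendsto g atTop (𝓝 0) := by
    apply squeeze_zero' (Filter.Eventually.of_forall ?_) ?_ hhT
    · intro j
      rw [hgdef]
      positivity
    · filter_upwards [hrT.eventually_ge_atTop (max 1 (2*c2/c3))] with j hj
      have hj1 : 1 ≤ r j := le_trans (le_max_left _ _) hj
      have hj2 : 2*c2/c3 ≤ r j := le_trans (le_max_right _ _) hj
      have hrj := hrpos j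
      have hr3 : 1 ≤ (r j)^3 := one_le_pow₀ hj1
      have hA : 1 + c1*(r j)^3 ≤ (1+c1)*(r j)^3 := by
        have e : (1+c1)*(r j)^3 = (r j)^3 + c1*(r j)^3 := by ring
        linarith
      have hAnn : 0 ≤ 1 + c1*(r j)^3 := by
        have := mul_nonneg hc1.le (pow_nonneg hrj.le 3)
        linarith
      have hA2 : (1 + c1*(r j)^3)^2 ≤ ((1+c1)*(r j)^3)^2 := pow_le_pow_left₀ hAnn hA 2
      have hE : Real.exp (c2*(r j) - c3*(r j)^2) ≤ Real.exp (-(c3/2 * (r j)^2)) := by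
        apply Real.exp_le_exp.2
        have h2 : 2*c2 ≤ c3 * r j := by
          rw [div_le_iff₀ hc3] at hj2; linarith
        linarith [mul_le_mul_of_nonneg_right h2 hrj.le]
      have mid : g j ≤ (M^2/T^6) * ((1+c1)*(r j)^3)^2 * (r j)^6 * Real.exp (-(c3/2 * (r j)^2)) := by
        rw [hgdef]
        have hK : (0:ℝ) ≤ M^2/T^6 := by positivity
        apply mul_le_mul ?_ hE (Real.exp_pos _).le (by positivity)
        apply mul_le_mul_of_nonneg_right ?_ (by positivity)
        exact mul_le_mul_of_nonneg_left hA2 hK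
      refine le_trans mid (le_of_eq ?_)
      have hc3ne : c3 ≠ 0 := ne_of_gt hc3
      field_simp
  -- Step 3: conclusion
  obtain ⟨ub, hub⟩ := hgT.bddAbove_range
  refine ⟨max ub 1, lt_of_lt_of_le one_pos (le_max_right _ _), fun j _ => ?_⟩
  exact le_trans (key j) (le_trans (hub (Set.mem_range_self j)) (le_max_left _ _))
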